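/- If X is a Lindelöf ẅ-regular T1 space, then every countable closed discrete subset D ⊆ X is strongly discrete: there exist open sets O_d ∋ d (d ∈ D) that are pairwise disjoint and form a locally finite family in X. -/

import Mathlib

open Filter Topology

/-- In a Lindelöf ẅ-regular T1 space `X`, every countable closed discrete
subset `D` is strongly discrete: the points of `D` admit pairwise disjoint
open neighborhoods forming a locally finite family in `X`. -/
theorem stmt6 {X : Type*} [TopologicalSpace X] [T1Space X] [LindelofSpace X]
    (hreg : ∀ F : Set X, IsClosed F → (∀ x : X, ¬ AccPt x (𝓟 F)) →
      ∀ x ∉ F, ∃ U V : Set X, IsOpen U ∧ IsOpen V ∧ F ⊆ U ∧ x ∈ V ∧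
        Disjoint U V)
    (D : Set X) (hDc : D.Countable) (hDcl : IsClosed D)
    (hDd : ∀ x : X, ¬ AccPt x (𝓟 D)) :
    ∃ O : X → Set X, (∀ d ∈ D, IsOpen (O d) ∧ d ∈ O d) ∧
      D.PairwiseDisjoint O ∧
      (∀ x : X, ∃ N ∈ 𝓝 x, {d ∈ D | (O d ∩ N).Nonempty}.Finite) := by
  classical
  rcases D.eq_empty_or_nonempty with hD | hD
  · refine ⟨fun _ => ∅, ?_, ?_, fun x => ⟨Set.univ, Filter.univ_mem, ?_⟩⟩
    · simp [hD]
    · simp [hD, Set.PairwiseDisjoint]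
    · apply Set.Finite.subset (Set.finite_empty)
      intro d hd
      simp [hD] at hd
  -- accumulation-freeness passes to subsets
  have haccsub : ∀ E : Set X, E ⊆ D → ∀ x : X, ¬ AccPt x (𝓟 E) := by
    intro E hE x hx
    exact hDd x (hx.mono (principal_mono.2 hE))
  -- subsets of D are closed
  have hclsub : ∀ E : Set X, E ⊆ D → IsClosed E := by
    intro E hE
    rw [← isOpen_compl_iff, isOpen_iff_mem_nhds]
    intro x hx
    by_contra hnx
    have hxcl : x ∈ closure E := by
      rw [mem_closure_iff_clusterPt, clusterPt_iff_not_disjoint]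
      intro hdis
      rw [Filter.disjoint_principal_right] at hdis
      exact hnx hdis
    have hxE : x ∉ E := hx
    have : AccPt x (𝓟 E) := by
      rw [accPt_principal_iff_clusterPt]
      have : E \ {x} = E := by
        ext y; simp only [Set.mem_diff, Set.mem_singleton_iff, and_iff_left_iff_imp]
        rintro hy rfl; exact hxE hy
      rw [this, ← mem_closure_iff_clusterPt]
      exact hxcl
    exact haccsub E hE x this
  -- injective enumeration function
  obtain ⟨f, hf⟩ : ∃ f : X → ℕ, Set.InjOn f D := Set.countable_iff_exists_injOn.1 hDc
  -- sets of D with bounded index are finite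
  have hfin : ∀ n : ℕ, {d' : X | d' ∈ D ∧ f d' ≤ n}.Finite := by
    intro n
    apply Set.Finite.of_finite_image (f := f)
    · apply (Set.finite_Iic n).subset
      rintro _ ⟨d', ⟨_, h⟩, rfl⟩
      exact h
    · exact hf.mono fun a ha => ha.1
  -- separating opens around each point of D
  have key : ∀ d : X, ∃ U V : Set X, d ∈ D →
      IsOpen U ∧ IsOpen V ∧ D \ {d} ⊆ U ∧ d ∈ V ∧ Disjoint U V := by
    intro d
    by_cases hd : d ∈ D
    · obtain ⟨U, V, h⟩ := hreg (D \ {d}) (hclsub _ Set.diff_subset)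
        (haccsub _ Set.diff_subset) d (by simp)
      exact ⟨U, V, fun _ => h⟩
    · exact ⟨∅, ∅, fun h => absurd h hd⟩
  choose U V hUV using key
  -- separating opens around each point outside D
  have key' : ∀ x : X, ∃ U V : Set X, x ∉ D →
      IsOpen U ∧ IsOpen V ∧ D ⊆ U ∧ x ∈ V ∧ Disjoint U V := by
    intro x
    by_cases hx : x ∈ D
    · exact ⟨∅, ∅, fun h => absurd hx h⟩
    · obtain ⟨U, V, h⟩ := hreg D hDcl hDd x hx
      exact ⟨U, V, fun _ => h⟩
  choose U' V' hUV' using key'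
  -- the cover
  set W : X ⊕ X → Set X := Sum.elim (fun d => if d ∈ D then V d else ∅)
    (fun x => if x ∈ D then ∅ else V' x) with hW
  have hWopen : ∀ i, IsOpen (W i) := by
    rintro (d | x) <;> simp only [hW, Sum.elim_inl, Sum.elim_inr]
    · split_ifs with h
      · exact ((hUV d h).2.1)
      · exact isOpen_empty
    · split_ifs with h
      · exact isOpen_empty
      · exact ((hUV' x h).2.1)
  have hWcover : Set.univ ⊆ ⋃ i, W i := by
    intro x _
    by_cases hx : x ∈ D
    · exact Set.mem_iUnion.2 ⟨Sum.inl x, by simp [hW, hx, (hUV x hx).2.2.2.1]⟩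
    · exact Set.mem_iUnion.2 ⟨Sum.inr x, by simp [hW, hx, (hUV' x hx).2.2.2.1]⟩
  obtain ⟨t, htc, htcov⟩ := isLindelof_univ.elim_countable_subcover W hWopen hWcover
  have htne : t.Nonempty := by
    obtain ⟨d0, hd0⟩ := hD
    obtain ⟨i, hi, -⟩ := Set.mem_iUnion₂.1 (htcov (Set.mem_univ d0))
    exact ⟨i, hi⟩
  obtain ⟨g, hg⟩ := htc.exists_eq_range htne
  -- exclusion opens
  set T : ℕ → Set X := fun k =>
    Sum.elim (fun _ => Set.univ) (fun x => if x ∈ D then Set.univ else U' x) (g k) with hT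
  have hTopen : ∀ k, IsOpen (T k) := by
    intro k
    simp only [hT]
    rcases g k with d | x
    · exact isOpen_univ
    · simp only [Sum.elim_inr]
      split_ifs with h
      · exact isOpen_univ
      · exact (hUV' x h).1
  have hTD : ∀ k, D ⊆ T k := by
    intro k
    simp only [hT]
    rcases g k with d | x
    · simp
    · simp only [Sum.elim_inr]
      split_ifs with h
      · simp
      · exact (hUV' x h).2.2.1
  -- the neighborhoods
  set O : X → Set X := fun d =>
    (V d ∩ ⋂ d' ∈ {d' : X | d' ∈ D ∧ f d' < f d}, U d') ∩ ⋂ k ∈ Finset.range (f d), T k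
    with hO
  have hOsubU : ∀ d ∈ D, ∀ d' ∈ D, f d' < f d → O d ⊆ U d' := by
    intro d hd d' hd' hlt x hx
    exact Set.mem_iInter₂.mp hx.1.2 d' ⟨hd', hlt⟩
  have hOsubT : ∀ d ∈ D, ∀ k, k < f d → O d ⊆ T k := by
    intro d hd k hk x hx
    exact Set.mem_iInter₂.mp hx.2 k (Finset.mem_range.2 hk)
  have hOsubV : ∀ d, O d ⊆ V d := fun d x hx => hx.1.1
  refine ⟨O, ?_, ?_, ?_⟩
  · -- open and containing d
    intro d hd
    constructor
    · apply IsOpen.inter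
      · apply IsOpen.inter (hUV d hd).2.1
        apply Set.Finite.isOpen_biInter
        · exact (hfin (f d)).subset fun a ⟨ha, h⟩ => ⟨ha, h.le⟩
        · intro d' ⟨hd', _⟩
          exact (hUV d' hd').1
      · exact isOpen_biInter_finset fun k _ => hTopen k
    · refine ⟨⟨(hUV d hd).2.2.2.1, ?_⟩, ?_⟩
      · apply Set.mem_biInter
        intro d' ⟨hd', hlt⟩
        apply (hUV d' hd').2.2.1
        refine ⟨hd, ?_⟩
        simp only [Set.mem_singleton_iff]
        rintro rfl
        exact lt_irrefl _ hlt
      · exact Set.mem_iInter₂.2 fun k _ => hTD k hd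
  · -- pairwise disjoint
    have main : ∀ d ∈ D, ∀ d' ∈ D, f d' < f d → Disjoint (O d) (O d') := by
      intro d hd d' hd' hlt
      exact Set.disjoint_of_subset (hOsubU d hd d' hd' hlt) (hOsubV d')
        (hUV d' hd').2.2.2.2
    intro d hd d' hd' hne
    rcases lt_trichotomy (f d) (f d') with h | h | h
    · exact (main d' hd' d hd h).symm
    · exact absurd (hf hd hd' h) hne
    · exact main d hd d' hd' h
  · -- local finiteness
    intro x
    obtain ⟨i, hi, hxi⟩ := Set.mem_iUnion₂.1 (htcov (Set.mem_univ x))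
    obtain ⟨k, rfl⟩ : ∃ k, g k = i := by
      have : i ∈ Set.range g := hg ▸ hi
      obtain ⟨k, hk⟩ := this
      exact ⟨k, hk⟩
    rcases hgk : g k with d1 | x1
    · rw [hgk] at hxi
      simp only [hW, Sum.elim_inl] at hxi
      by_cases hd1 : d1 ∈ D
      · rw [if_pos hd1] at hxi
        refine ⟨V d1, ((hUV d1 hd1).2.1).mem_nhds hxi, ?_⟩
        apply (hfin (f d1)).subset
        rintro d ⟨hd, hne⟩
        refine ⟨hd, ?_⟩
        by_contra hgt
        push_neg at hgt
        have : Disjoint (O d) (V d1) :=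
          Set.disjoint_of_subset (hOsubU d hd d1 hd1 hgt) (le_refl _)
            (hUV d1 hd1).2.2.2.2
        exact hne.not_subset_empty (by rw [Set.disjoint_iff_inter_eq_empty.1 this])
      · rw [if_neg hd1] at hxi
        exact absurd hxi (Set.notMem_empty x)
    · rw [hgk] at hxi
      simp only [hW, Sum.elim_inr] at hxi
      by_cases hx1 : x1 ∈ D
      · rw [if_pos hx1] at hxi
        exact absurd hxi (Set.notMem_empty x)
      · rw [if_neg hx1] at hxi
        refine ⟨V' x1, ((hUV' x1 hx1).2.1).mem_nhds hxi, ?_⟩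
        apply (hfin k).subset
        rintro d ⟨hd, hne⟩
        refine ⟨hd, ?_⟩
        by_contra hgt
        push_neg at hgt
        have hTk : T k = U' x1 := by
          simp [hT, hgk, hx1]
        have : Disjoint (O d) (V' x1) := by
          refine Set.disjoint_of_subset ?_ (le_refl _) (hUV' x1 hx1).2.2.2.2
          rw [← hTk]
          exact hOsubT d hd k hgt
        exact hne.not_subset_empty (by rw [Set.disjoint_iff_inter_eq_empty.1 this])
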